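/- If T is a maximal partial transversal of a Latin square of order n (a set of cells, no two sharing a row, column, or symbol, that cannot be extended to a larger such set), then the length of T satisfies ⌈n/2⌉ ≤ |T| ≤ n. -/
import Mathlib


/-- A Latin square of order `n` as a set of triples `(r,c,s)`:
any two coordinates determine the third uniquely. -/
def IsLatinSquare {n : ℕ} (L : Finset (Fin n × Fin n × Fin n)) : Prop :=
  (∀ r c : Fin n, ∃! s : Fin n, (r, c, s) ∈ L) ∧
  (∀ r s : Fin n, ∃! c : Fin n, (r, c, s) ∈ L) ∧
  (∀ c s : Fin n, ∃! r : Fin n, (r, c, s) ∈ L)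

/-- A partial transversal: a subset of the triples with pairwise distinct
rows, columns and symbols. -/
def IsPartialTransversal {α β γ : Type*} (L T : Finset (α × β × γ)) : Prop :=
  T ⊆ L ∧ ∀ t ∈ T, ∀ t' ∈ T, t ≠ t' →
    t.1 ≠ t'.1 ∧ t.2.1 ≠ t'.2.1 ∧ t.2.2 ≠ t'.2.2

/-- A maximal partial transversal: one not properly contained in any
larger partial transversal. -/
def IsMaximalPartialTransversal {α β γ : Type*} (L T : Finset (α × β × γ)) : Prop :=
  IsPartialTransversal L T ∧
    ∀ T' : Finset (α × β × γ), IsPartialTransversal L T' → T ⊆ T' → T' = T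

theorem stmt0 {n : ℕ} (L T : Finset (Fin n × Fin n × Fin n))
    (hL : IsLatinSquare L) (hT : IsMaximalPartialTransversal L T) :
    (n + 1) / 2 ≤ T.card ∧ T.card ≤ n := by
  classical
  obtain ⟨⟨hTL, hTd⟩, hmax⟩ := hT
  set R : Finset (Fin n) := T.image (·.1) with hR
  set C : Finset (Fin n) := T.image (·.2.1) with hC
  set S : Finset (Fin n) := T.image (·.2.2) with hS
  have hinjR : Set.InjOn (fun t : Fin n × Fin n × Fin n => t.1) T := by
    intro a ha b hb hab
    by_contra h
    exact (hTd a ha b hb h).1 hab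
  have hRcard : R.card = T.card := Finset.card_image_of_injOn hinjR
  have hScard : S.card ≤ T.card := Finset.card_image_le
  have hub : T.card ≤ n := by
    calc T.card = R.card := hRcard.symm
    _ ≤ (Finset.univ : Finset (Fin n)).card := Finset.card_le_card (Finset.subset_univ _)
    _ = n := by simp
  -- the symbol in cell (r,c)
  set f : Fin n × Fin n → Fin n := fun p => (hL.1 p.1 p.2).choose with hf
  have hfspec : ∀ p : Fin n × Fin n, (p.1, p.2, f p) ∈ L := fun p => (hL.1 p.1 p.2).choose_spec.1
  -- the key claim
  have hclaim : ∀ p : Fin n × Fin n, p.1 ∉ R → p.2 ∉ C → f p ∈ S := by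
    intro p hr hc
    by_contra hs
    have hnotT : ∀ t ∈ T, (p.1, p.2, f p) ≠ t ∧ p.1 ≠ t.1 ∧ p.2 ≠ t.2.1 ∧ f p ≠ t.2.2 := by
      intro t ht
      refine ⟨?_, ?_, ?_, ?_⟩
      · rintro rfl; exact hr (Finset.mem_image_of_mem _ ht)
      · intro h; exact hr (h ▸ Finset.mem_image_of_mem _ ht)
      · intro h; exact hc (h ▸ Finset.mem_image_of_mem _ ht)
      · intro h; exact hs (h ▸ Finset.mem_image_of_mem _ ht)
    have hPT : IsPartialTransversal L (insert (p.1, p.2, f p) T) := by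
      constructor
      · exact Finset.insert_subset (hfspec p) hTL
      · intro t ht t' ht' hne
        rcases Finset.mem_insert.mp ht with rfl | ht
        · rcases Finset.mem_insert.mp ht' with rfl | ht'
          · exact absurd rfl hne
          · exact (hnotT t' ht').2
        · rcases Finset.mem_insert.mp ht' with rfl | ht'
          · obtain ⟨-, h1, h2, h3⟩ := hnotT t ht
            exact ⟨h1.symm, h2.symm, h3.symm⟩
          · exact hTd t ht t' ht' hne
    have heq := hmax _ hPT (Finset.subset_insert _ _)
    have : (p.1, p.2, f p) ∈ T := heq ▸ Finset.mem_insert_self _ _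
    exact hr (Finset.mem_image_of_mem _ this)
  -- counting on the subarray Rᶜ × Cᶜ
  set P : Finset (Fin n × Fin n) := Rᶜ ×ˢ Cᶜ with hP
  have hmaps : ∀ p ∈ P, f p ∈ S := by
    intro p hp
    rw [hP, Finset.mem_product] at hp
    exact hclaim p (by simpa using hp.1) (by simpa using hp.2)
  have hinjC : Set.InjOn (fun t : Fin n × Fin n × Fin n => t.2.1) T := by
    intro a ha b hb hab
    by_contra h
    exact (hTd a ha b hb h).2.1 hab
  have hCcard : C.card = T.card := Finset.card_image_of_injOn hinjC
  have hfiber : ∀ s ∈ S, (P.filter (fun p => f p = s)).card ≤ n - T.card := by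
    intro s _
    have hmem : ∀ p ∈ P.filter (fun p => f p = s), p.1 ∈ Rᶜ := by
      intro p hp
      rw [Finset.mem_filter, hP, Finset.mem_product] at hp
      exact hp.1.1
    have hinj : Set.InjOn (fun p : Fin n × Fin n => p.1)
        (P.filter (fun p => f p = s)) := by
      intro p hp q hq h
      simp only [Finset.coe_filter, Set.mem_setOf_eq] at hp hq
      have h1 : (p.1, p.2, s) ∈ L := hp.2 ▸ hfspec p
      have h2 : (p.1, q.2, s) ∈ L := by
        have h' : p.1 = q.1 := h
        have := hq.2 ▸ hfspec q
        rwa [← h'] at this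
      have := (hL.2.1 p.1 s).unique h1 h2
      exact Prod.ext (h : p.1 = q.1) this
    calc (P.filter (fun p => f p = s)).card ≤ Rᶜ.card :=
          Finset.card_le_card_of_injOn _ hmem hinj
      _ = n - T.card := by rw [Finset.card_compl, hRcard, Fintype.card_fin]
  have hcount : (n - T.card) * (n - T.card) ≤ T.card * (n - T.card) := by
    have h1 : P.card = (n - T.card) * (n - T.card) := by
      rw [hP, Finset.card_product, Finset.card_compl, Finset.card_compl,
        hRcard, hCcard, Fintype.card_fin]
    calc (n - T.card) * (n - T.card) = P.card := h1.symm
      _ = ∑ s ∈ S, (P.filter (fun p => f p = s)).card :=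
          Finset.card_eq_sum_card_fiberwise hmaps
      _ ≤ ∑ _s ∈ S, (n - T.card) := Finset.sum_le_sum hfiber
      _ = S.card * (n - T.card) := by rw [Finset.sum_const, smul_eq_mul]
      _ ≤ T.card * (n - T.card) := Nat.mul_le_mul_right _ hScard
  have hlb : n ≤ 2 * T.card := by
    rcases Nat.eq_zero_or_pos (n - T.card) with h | h
    · omega
    · have := Nat.le_of_mul_le_mul_right hcount h
      omega
  exact ⟨by omega, hub⟩
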